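/- arXiv:2409.20546 — 4 statements merged into one kernel-verified Lean document; each statement's English description precedes it below -/
import Mathlib

section
/- Let X ~ BG(α₁, p₁, α₂, p₂) and let ν_bg(du) = (p₁/u · e^{-α₁ u} 1_{(0,∞)}(u) - p₂/u · e^{-α₂|u|} 1_{(-∞,0)}(u)) du be its Lévy measure. Then for every Schwartz function f, E[ X f(X) - ∫_ℝ f(X+u) u ν_bg(du) ] = 0. -/
open MeasureTheory ProbabilityTheory Real Set
open scoped ENNReal NNReal

/-- Density (with respect to Lebesgue measure) of the Lévy measure of the bilateral gamma
distribution `BG(α₁, p₁, α₂, p₂)`: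
`ν_bg(du) = (p₁/u e^{-α₁u} 1_{(0,∞)}(u) - p₂/u e^{-α₂|u|} 1_{(-∞,0)}(u)) du`. -/
noncomputable def bgLevyDensity (α₁ p₁ α₂ p₂ : ℝ) (u : ℝ) : ℝ :=
  if 0 < u then p₁ / u * Real.exp (-α₁ * u)
  else if u < 0 then -(p₂ / u * Real.exp (-α₂ * |u|))
  else 0

namespace BGStein


variable {a r : ℝ}

lemma gammaMeasure_eq_withDensity (a r : ℝ) : gammaMeasure a r
    = volume.withDensity (fun x => ((gammaPDFReal a r x).toNNReal : ℝ≥0∞)) := rfl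

lemma integrable_gammaPDFReal (ha : 0 < a) (hr : 0 < r) :
    Integrable (gammaPDFReal a r) := by
  refine ⟨(measurable_gammaPDFReal a r).aestronglyMeasurable, ?_⟩
  rw [hasFiniteIntegral_iff_ofReal (ae_of_all _ (gammaPDFReal_nonneg ha hr))]
  have h := lintegral_gammaPDF_eq_one ha hr
  simp only [gammaPDF] at h
  rw [h]
  exact ENNReal.one_lt_top

lemma integral_gammaMeasure (ha : 0 < a) (hr : 0 < r) (g : ℝ → ℝ) :
    ∫ x, g x ∂(gammaMeasure a r) = ∫ x, gammaPDFReal a r x * g x := by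
  rw [gammaMeasure_eq_withDensity, integral_withDensity_eq_integral_smul
    (measurable_gammaPDFReal a r).real_toNNReal g]
  refine integral_congr_ae (ae_of_all _ fun x => ?_)
  simp [NNReal.smul_def, Real.coe_toNNReal _ (gammaPDFReal_nonneg ha hr x)]

lemma integrable_gammaMeasure_iff (ha : 0 < a) (hr : 0 < r) {g : ℝ → ℝ} :
    Integrable g (gammaMeasure a r)
      ↔ Integrable (fun x => gammaPDFReal a r x * g x) volume := by
  rw [gammaMeasure_eq_withDensity, integrable_withDensity_iff_integrable_smul
    (measurable_gammaPDFReal a r).real_toNNReal]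
  constructor <;> intro h <;> refine h.congr (ae_of_all _ fun x => ?_) <;>
    simp [NNReal.smul_def, Real.coe_toNNReal _ (gammaPDFReal_nonneg ha hr x)]

lemma key_pdf_mul (ha : 0 < a) (hr : 0 < r) (x : ℝ) :
    x * gammaPDFReal a r x = (a / r) * gammaPDFReal (a + 1) r x := by
  have hΓ : Real.Gamma a ≠ 0 := (Real.Gamma_pos_of_pos ha).ne'
  unfold gammaPDFReal
  rcases lt_trichotomy x 0 with hx | hx | hx
  · rw [if_neg (not_le.mpr hx), if_neg (not_le.mpr hx)]; ring
  · subst hx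
    rw [if_pos le_rfl, if_pos le_rfl, add_sub_cancel_right,
      Real.zero_rpow ha.ne']
    ring
  · rw [if_pos hx.le, if_pos hx.le, Real.Gamma_add_one ha.ne',
      add_sub_cancel_right, Real.rpow_add_one hr.ne',
      show a = (a - 1) + 1 by ring, Real.rpow_add_one hx.ne']
    rw [show a - 1 + 1 = a by ring]
    field_simp

lemma gammaPDFReal_of_neg {x : ℝ} (hx : x < 0) : gammaPDFReal a r x = 0 := by
  unfold gammaPDFReal; rw [if_neg (not_le.mpr hx)]

lemma gamma_conv_integrableOn (ha : 0 < a) (hr : 0 < r) (t : ℝ) :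
    IntegrableOn (fun u => a * exp (-r * u) * gammaPDFReal a r (t - u)) (Ioi 0) := by
  rcases le_or_gt t 0 with ht | ht
  · refine (integrableOn_zero (s := Ioi 0)).congr_fun (fun u hu => ?_) measurableSet_Ioi
    rw [mem_Ioi] at hu
    rw [gammaPDFReal_of_neg (by linarith), mul_zero]
  · rw [← Ioc_union_Ioi_eq_Ioi ht.le, integrableOn_union]
    constructor
    · have h1 : IntervalIntegrable (fun v : ℝ => v ^ (a - 1)) volume 0 t :=
        intervalIntegral.intervalIntegrable_rpow' (by linarith)
      have h2 : IntervalIntegrable (fun u : ℝ => (t - u) ^ (a - 1)) volume 0 t := by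
        simpa using (h1.comp_sub_left t).symm
      have h3 : IntegrableOn (fun u : ℝ => (t - u) ^ (a - 1)) (Ioc 0 t) :=
        (intervalIntegrable_iff_integrableOn_Ioc_of_le ht.le).mp h2
      refine IntegrableOn.congr_fun (h3.const_mul (a * (r ^ a / Real.Gamma a) * exp (-(r * t))))
        (fun u hu => ?_) measurableSet_Ioc
      rw [mem_Ioc] at hu
      unfold gammaPDFReal
      rw [if_pos (by linarith : (0:ℝ) ≤ t - u)]
      have hexp : exp (-r * u) * exp (-(r * (t - u))) = exp (-(r * t)) := by
        rw [← Real.exp_add]; congr 1; ring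
      linear_combination (-(a * (r ^ a / Real.Gamma a) * (t - u) ^ (a - 1))) * hexp
    · refine (integrableOn_zero (s := Ioi t)).congr_fun (fun u hu => ?_) measurableSet_Ioi
      rw [mem_Ioi] at hu
      rw [gammaPDFReal_of_neg (by linarith), mul_zero]

lemma gamma_conv (ha : 0 < a) (hr : 0 < r) (t : ℝ) :
    ∫ u in Ioi (0:ℝ), a * exp (-r * u) * gammaPDFReal a r (t - u)
      = (a / r) * gammaPDFReal (a + 1) r t := by
  have hΓ : Real.Gamma a ≠ 0 := (Real.Gamma_pos_of_pos ha).ne'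
  rcases le_or_gt t 0 with ht | ht
  · have h0 : ∀ u ∈ Ioi (0:ℝ), a * exp (-r * u) * gammaPDFReal a r (t - u) = (fun _ => (0:ℝ)) u := by
      intro u hu; rw [mem_Ioi] at hu
      rw [gammaPDFReal_of_neg (by linarith), mul_zero]
    rw [setIntegral_congr_fun measurableSet_Ioi h0, integral_zero]
    rcases eq_or_lt_of_le ht with rfl | ht'
    · unfold gammaPDFReal
      rw [if_pos le_rfl, add_sub_cancel_right, Real.zero_rpow ha.ne']
      ring
    · rw [gammaPDFReal_of_neg ht']; ring
  · have hzero : ∀ u ∈ Ioi t, a * exp (-r * u) * gammaPDFReal a r (t - u) = 0 := by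
      intro u hu; rw [mem_Ioi] at hu
      rw [gammaPDFReal_of_neg (by linarith), mul_zero]
    have hIoc : IntegrableOn (fun u => a * exp (-r * u) * gammaPDFReal a r (t - u)) (Ioc 0 t) :=
      ((gamma_conv_integrableOn ha hr t).mono_set (Ioc_subset_Ioi_self))
    have hIoi : IntegrableOn (fun u => a * exp (-r * u) * gammaPDFReal a r (t - u)) (Ioi t) :=
      (integrableOn_zero (s := Ioi t)).congr_fun (fun u hu => (hzero u hu).symm) measurableSet_Ioi
    rw [← Ioc_union_Ioi_eq_Ioi ht.le,
      setIntegral_union (Ioc_disjoint_Ioi le_rfl) measurableSet_Ioi hIoc hIoi,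
      setIntegral_congr_fun measurableSet_Ioi hzero, integral_zero, add_zero]
    have hcongr : ∀ u ∈ Ioc 0 t, a * exp (-r * u) * gammaPDFReal a r (t - u)
        = (a * (r ^ a / Real.Gamma a) * exp (-(r * t))) * (t - u) ^ (a - 1) := by
      intro u hu; rw [mem_Ioc] at hu
      unfold gammaPDFReal
      rw [if_pos (by linarith : (0:ℝ) ≤ t - u)]
      have hexp : exp (-r * u) * exp (-(r * (t - u))) = exp (-(r * t)) := by
        rw [← Real.exp_add]; congr 1; ring
      linear_combination (a * (r ^ a / Real.Gamma a) * (t - u) ^ (a - 1)) * hexp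
    rw [setIntegral_congr_fun measurableSet_Ioc hcongr, integral_const_mul,
      ← intervalIntegral.integral_of_le ht.le,
      intervalIntegral.integral_comp_sub_left (fun v : ℝ => v ^ (a - 1)) t,
      sub_self, sub_zero, integral_rpow (Or.inl (by linarith)),
      sub_add_cancel, Real.zero_rpow ha.ne']
    unfold gammaPDFReal
    rw [if_pos ht.le, Real.Gamma_add_one ha.ne', add_sub_cancel_right,
      Real.rpow_add_one hr.ne']
    field_simp
    ring

lemma gamma_stein (ha : 0 < a) (hr : 0 < r) (g : ℝ → ℝ) (hgc : Continuous g)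
    (C : ℝ) (hC : ∀ x, |g x| ≤ C) :
    ∫ x, x * g x ∂(gammaMeasure a r)
      = ∫ x, (∫ u in Ioi (0:ℝ), g (x + u) * (a * exp (-r * u))) ∂(gammaMeasure a r) := by
  have hC0 : 0 ≤ C := le_trans (abs_nonneg _) (hC 0)
  have hpdf := integrable_gammaPDFReal ha hr
  have hpdf1 : Integrable (gammaPDFReal (a + 1) r) := integrable_gammaPDFReal (by linarith) hr
  -- LHS as Lebesgue integral
  have hL : ∫ x, x * g x ∂(gammaMeasure a r)
      = ∫ t, g t * ((a / r) * gammaPDFReal (a + 1) r t) := by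
    rw [integral_gammaMeasure ha hr]
    refine integral_congr_ae (ae_of_all _ fun x => ?_)
    show gammaPDFReal a r x * (x * g x) = g x * (a / r * gammaPDFReal (a + 1) r x)
    rw [show gammaPDFReal a r x * (x * g x) = (x * gammaPDFReal a r x) * g x from by ring,
      key_pdf_mul ha hr x]
    ring
  -- RHS as Lebesgue integral
  rw [hL, integral_gammaMeasure ha hr]
  -- measurability of the (x,u) integrand
  have hmeasF : AEStronglyMeasurable
      (Function.uncurry fun x u => gammaPDFReal a r x * (g (x + u) * (a * exp (-r * u))))
      (volume.prod (volume.restrict (Ioi 0))) := by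
    apply Measurable.aestronglyMeasurable
    exact ((measurable_gammaPDFReal a r).comp measurable_fst).mul
      ((hgc.measurable.comp (measurable_fst.add measurable_snd)).mul
        ((measurable_snd.const_mul (-r)).exp.const_mul a))
  have hexpInt : Integrable (fun u => exp (-r * u)) (volume.restrict (Ioi 0)) :=
    exp_neg_integrableOn_Ioi 0 hr
  have hInt1 : Integrable
      (Function.uncurry fun x u => gammaPDFReal a r x * (g (x + u) * (a * exp (-r * u))))
      (volume.prod (volume.restrict (Ioi 0))) := by
    have hdom : Integrable (fun z : ℝ × ℝ => gammaPDFReal a r z.1 * exp (-r * z.2))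
        (volume.prod (volume.restrict (Ioi 0))) := hpdf.mul_prod hexpInt
    refine Integrable.mono' (hdom.const_mul (C * a)) hmeasF (ae_of_all _ fun z => ?_)
    have hg' := hC (z.1 + z.2)
    have hpnn := gammaPDFReal_nonneg ha hr z.1
    have hen : (0:ℝ) ≤ exp (-r * z.2) := (exp_pos _).le
    rw [Function.uncurry, Real.norm_eq_abs, abs_mul, abs_mul, abs_mul,
      abs_of_nonneg hpnn, abs_of_nonneg ha.le, abs_of_nonneg hen]
    calc gammaPDFReal a r z.1 * (|g (z.1 + z.2)| * (a * exp (-r * z.2)))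
        ≤ gammaPDFReal a r z.1 * (C * (a * exp (-r * z.2))) := by
          refine mul_le_mul_of_nonneg_left (mul_le_mul_of_nonneg_right hg' (by positivity)) hpnn
      _ = C * a * (gammaPDFReal a r z.1 * exp (-r * z.2)) := by ring
  -- swap 1
  have hR1 : ∫ x, gammaPDFReal a r x * (∫ u in Ioi (0:ℝ), g (x + u) * (a * exp (-r * u)))
      = ∫ u in Ioi (0:ℝ), ∫ x, gammaPDFReal a r x * (g (x + u) * (a * exp (-r * u))) := by
    simp_rw [← integral_const_mul]
    exact integral_integral_swap hInt1
  -- translate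
  have htrans : ∀ u : ℝ, (∫ x, gammaPDFReal a r x * (g (x + u) * (a * exp (-r * u))))
      = ∫ t, gammaPDFReal a r (t - u) * (g t * (a * exp (-r * u))) := by
    intro u
    have h := MeasureTheory.integral_add_right_eq_self (μ := volume)
      (fun t => gammaPDFReal a r (t - u) * (g t * (a * exp (-r * u)))) u
    rw [← h]
    refine integral_congr_ae (ae_of_all _ fun x => ?_)
    simp only [add_sub_cancel_right]
  -- second integrand measurability
  have hmeasF2 : AEStronglyMeasurable
      (Function.uncurry fun u t => gammaPDFReal a r (t - u) * (g t * (a * exp (-r * u))))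
      ((volume.restrict (Ioi 0)).prod volume) := by
    apply Measurable.aestronglyMeasurable
    exact ((measurable_gammaPDFReal a r).comp (measurable_snd.sub measurable_fst)).mul
      ((hgc.measurable.comp measurable_snd).mul
        ((measurable_fst.const_mul (-r)).exp.const_mul a))
  have hIpdf : ∫ t : ℝ, gammaPDFReal a r t = 1 ∨ True := Or.inr trivial
  -- integrability for swap 2
  have hInt2 : Integrable
      (Function.uncurry fun u t => gammaPDFReal a r (t - u) * (g t * (a * exp (-r * u))))
      ((volume.restrict (Ioi 0)).prod volume) := by
    rw [integrable_prod_iff hmeasF2]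
    simp only [Function.uncurry_apply_pair]
    constructor
    · refine ae_of_all _ fun u => ?_
      have h1 : Integrable (fun t => gammaPDFReal a r (t - u)) volume := hpdf.comp_sub_right u
      have h2 : Integrable (fun t => (g t * (a * exp (-r * u))) * gammaPDFReal a r (t - u))
          volume := by
        refine Integrable.bdd_mul (f := fun t => g t * (a * exp (-r * u)))
          (c := C * (a * exp (-r * u))) h1
          ((hgc.mul continuous_const).aestronglyMeasurable)
          (ae_of_all _ fun t => ?_)
        rw [Real.norm_eq_abs, abs_mul]
        calc |g t| * |a * exp (-r * u)| ≤ C * |a * exp (-r * u)| :=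
              mul_le_mul_of_nonneg_right (hC t) (abs_nonneg _)
          _ = C * (a * exp (-r * u)) := by
              rw [abs_of_nonneg (by positivity)]
      refine h2.congr (ae_of_all _ fun t => by ring)
    · -- Integrable (fun u => ∫ t, ‖...‖)
      have hIval : ∀ u : ℝ, ∫ t, ‖gammaPDFReal a r (t - u) * (g t * (a * exp (-r * u)))‖
          ≤ (C * a * (∫ t : ℝ, gammaPDFReal a r t)) * exp (-r * u) := by
        intro u
        have h1 : Integrable (fun t => gammaPDFReal a r (t - u)) volume := hpdf.comp_sub_right u
        have hF : Integrable (fun t => gammaPDFReal a r (t - u) * (g t * (a * exp (-r * u))))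
            volume := by
          refine (Integrable.bdd_mul (f := fun t => g t * (a * exp (-r * u)))
            (c := C * (a * exp (-r * u))) h1
            ((hgc.mul continuous_const).aestronglyMeasurable)
            (ae_of_all _ fun t => ?_)).congr (ae_of_all _ fun t => by ring)
          rw [Real.norm_eq_abs, abs_mul]
          calc |g t| * |a * exp (-r * u)| ≤ C * |a * exp (-r * u)| :=
                mul_le_mul_of_nonneg_right (hC t) (abs_nonneg _)
            _ = C * (a * exp (-r * u)) := by rw [abs_of_nonneg (by positivity)]
        have hnormle : ∀ t : ℝ, ‖gammaPDFReal a r (t - u) * (g t * (a * exp (-r * u)))‖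
            ≤ gammaPDFReal a r (t - u) * (C * (a * exp (-r * u))) := by
          intro t
          rw [Real.norm_eq_abs, abs_mul, abs_mul, abs_mul,
            abs_of_nonneg (gammaPDFReal_nonneg ha hr _), abs_of_nonneg ha.le,
            abs_of_nonneg (exp_pos _).le]
          exact mul_le_mul_of_nonneg_left
            (mul_le_mul_of_nonneg_right (hC t) (by positivity))
            (gammaPDFReal_nonneg ha hr _)
        have h2 : Integrable (fun t => gammaPDFReal a r (t - u) * (C * (a * exp (-r * u))))
            volume := h1.mul_const _
        calc ∫ t, ‖gammaPDFReal a r (t - u) * (g t * (a * exp (-r * u)))‖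
            ≤ ∫ t, gammaPDFReal a r (t - u) * (C * (a * exp (-r * u))) :=
              integral_mono hF.norm h2 hnormle
          _ = (C * a * (∫ t : ℝ, gammaPDFReal a r t)) * exp (-r * u) := by
              rw [integral_mul_const,
                show (∫ t, gammaPDFReal a r (t - u)) = ∫ t : ℝ, gammaPDFReal a r t from
                  MeasureTheory.integral_sub_right_eq_self (gammaPDFReal a r) u]
              ring
      refine Integrable.mono' ((hexpInt.const_mul
        (C * a * (∫ t : ℝ, gammaPDFReal a r t)))) ?_ (ae_of_all _ fun u => ?_)
      · exact (hmeasF2.norm.integral_prod_right').congr (ae_of_all _ fun u => by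
          simp only [Function.uncurry_apply_pair])
      · rw [Real.norm_eq_abs, abs_of_nonneg (integral_nonneg fun t => norm_nonneg _)]
        exact hIval u
  -- finish
  have hfin : ∀ t : ℝ, (∫ u in Ioi (0:ℝ), gammaPDFReal a r (t - u) * (g t * (a * exp (-r * u))))
      = g t * ((a / r) * gammaPDFReal (a + 1) r t) := by
    intro t
    have : ∀ u : ℝ, gammaPDFReal a r (t - u) * (g t * (a * exp (-r * u)))
        = (a * exp (-r * u) * gammaPDFReal a r (t - u)) * g t := fun u => by ring
    rw [integral_congr_ae (ae_of_all _ fun u => this u), integral_mul_const, gamma_conv ha hr t]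
    ring
  symm
  calc ∫ x, gammaPDFReal a r x * (∫ u in Ioi (0:ℝ), g (x + u) * (a * exp (-r * u)))
      = ∫ u in Ioi (0:ℝ), ∫ x, gammaPDFReal a r x * (g (x + u) * (a * exp (-r * u))) := hR1
    _ = ∫ u in Ioi (0:ℝ), ∫ t, gammaPDFReal a r (t - u) * (g t * (a * exp (-r * u))) := by
        refine integral_congr_ae (ae_of_all _ fun u => htrans u)
    _ = ∫ t, ∫ u in Ioi (0:ℝ), gammaPDFReal a r (t - u) * (g t * (a * exp (-r * u))) :=
        integral_integral_swap hInt2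
    _ = ∫ t, g t * ((a / r) * gammaPDFReal (a + 1) r t) :=
        integral_congr_ae (ae_of_all _ fun t => hfin t)

lemma integrable_id_gamma {a r : ℝ} (ha : 0 < a) (hr : 0 < r) :
    Integrable (fun x : ℝ => x) (gammaMeasure a r) := by
  rw [integrable_gammaMeasure_iff ha hr]
  refine ((integrable_gammaPDFReal (by linarith : (0:ℝ) < a + 1) hr).const_mul
    (a / r)).congr (ae_of_all _ fun x => ?_)
  show a / r * gammaPDFReal (a + 1) r x = gammaPDFReal a r x * x
  rw [← key_pdf_mul ha hr x]; ring

lemma helper_int {r : ℝ} (hr : 0 < r) (p : ℝ) {C : ℝ} (g : ℝ → ℝ) (hgc : Continuous g)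
    (hC : ∀ x, |g x| ≤ C) :
    IntegrableOn (fun u => g u * (p * exp (-r * u))) (Ioi 0) := by
  refine Integrable.bdd_mul (f := g) (c := C)
    ((exp_neg_integrableOn_Ioi 0 hr).const_mul p) hgc.aestronglyMeasurable
    (ae_of_all _ fun u => ?_)
  rw [Real.norm_eq_abs]; exact hC u

lemma helper_bd {r : ℝ} (hr : 0 < r) {p C : ℝ} (hp : 0 ≤ p) (hC0 : 0 ≤ C) (g : ℝ → ℝ)
    (hgc : Continuous g) (hC : ∀ x, |g x| ≤ C) :
    |∫ u in Ioi (0:ℝ), g u * (p * exp (-r * u))|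
      ≤ C * (p * ∫ u in Ioi (0:ℝ), exp (-r * u)) := by
  rw [← Real.norm_eq_abs]
  calc ‖∫ u in Ioi (0:ℝ), g u * (p * exp (-r * u))‖
      ≤ ∫ u in Ioi (0:ℝ), ‖g u * (p * exp (-r * u))‖ := norm_integral_le_integral_norm _
    _ ≤ ∫ u in Ioi (0:ℝ), C * (p * exp (-r * u)) := by
        refine integral_mono (helper_int hr p g hgc hC).norm
          (((exp_neg_integrableOn_Ioi 0 hr).const_mul p).const_mul C) (fun u => ?_)
        rw [Real.norm_eq_abs, abs_mul, abs_of_nonneg (by positivity : (0:ℝ) ≤ p * exp (-r * u))]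
        exact mul_le_mul_of_nonneg_right (hC u) (by positivity)
    _ = C * (p * ∫ u in Ioi (0:ℝ), exp (-r * u)) := by
        rw [integral_const_mul, integral_const_mul]

lemma Gsplit {α₁ α₂ p₁ p₂ : ℝ} (hα₁ : 0 < α₁) (hα₂ : 0 < α₂) (f : ℝ → ℝ)
    (hf : Continuous f) (C : ℝ) (hC : ∀ x, |f x| ≤ C) (s : ℝ) :
    ∫ u : ℝ, f (s + u) * (u * bgLevyDensity α₁ p₁ α₂ p₂ u)
      = (∫ u in Ioi (0:ℝ), f (s + u) * (p₁ * exp (-α₁ * u)))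
        - ∫ u in Ioi (0:ℝ), f (s - u) * (p₂ * exp (-α₂ * u)) := by
  have hIoi_eq : ∀ u ∈ Ioi (0:ℝ), f (s + u) * (u * bgLevyDensity α₁ p₁ α₂ p₂ u)
      = f (s + u) * (p₁ * exp (-α₁ * u)) := by
    intro u hu; rw [mem_Ioi] at hu
    rw [bgLevyDensity, if_pos hu]
    congr 1
    field_simp
  have hIio_eq : ∀ u ∈ Iio (0:ℝ), f (s + u) * (u * bgLevyDensity α₁ p₁ α₂ p₂ u)
      = -(f (s + u) * (p₂ * exp (α₂ * u))) := by
    intro u hu; rw [mem_Iio] at hu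
    rw [bgLevyDensity, if_neg (by linarith), if_pos hu, abs_of_neg hu]
    rw [show -α₂ * -u = α₂ * u by ring]
    have hu' : u ≠ 0 := ne_of_lt hu
    field_simp
  have hIntIoi : IntegrableOn (fun u => f (s + u) * (u * bgLevyDensity α₁ p₁ α₂ p₂ u))
      (Ioi 0) := by
    refine IntegrableOn.congr_fun
      (helper_int hα₁ p₁ (fun u => f (s + u))
        (hf.comp (continuous_const.add continuous_id)) (fun u => hC _))
      (fun u hu => (hIoi_eq u hu).symm) measurableSet_Ioi
  have hInt2 : IntegrableOn (fun u => f (s - u) * (p₂ * exp (-α₂ * u))) (Ioi 0) :=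
    helper_int hα₂ p₂ (fun u => f (s - u))
      (hf.comp (continuous_const.sub continuous_id)) (fun u => hC _)
  have h0ne : ∀ᵐ u : ℝ ∂volume, u ≠ 0 := by
    rw [ae_iff]
    simp only [ne_eq, not_not, Set.setOf_eq_eq_singleton]
    exact measure_singleton 0
  have hniceIio : IntegrableOn (fun u => -(f (s + u) * (p₂ * exp (α₂ * u)))) (Iio 0) := by
    have h1 : IntegrableOn (fun u => -(f (s - u) * (p₂ * exp (-α₂ * u)))) (Ioi 0) :=
      hInt2.neg
    have hmp := (MeasurePreserving.integrableOn_comp_preimage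
      (Measure.measurePreserving_neg (volume : Measure ℝ))
      (Homeomorph.neg ℝ).measurableEmbedding
      (f := fun u => -(f (s + u) * (p₂ * exp (α₂ * u)))) (s := Iio (0:ℝ)))
    refine hmp.mp ?_
    have hpre : (Neg.neg ⁻¹' (Iio (0:ℝ)) : Set ℝ) = Ioi 0 := by
      ext x; simp
    rw [show ((fun u => -(f (s + u) * (p₂ * exp (α₂ * u)))) ∘ Neg.neg)
        = fun u => -(f (s - u) * (p₂ * exp (-α₂ * u))) from by
      funext u; simp [Function.comp, sub_eq_add_neg, mul_neg, neg_mul], hpre]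
    exact h1
  have haeIic : (fun u => f (s + u) * (u * bgLevyDensity α₁ p₁ α₂ p₂ u))
      =ᵐ[volume.restrict (Iic 0)] fun u => -(f (s + u) * (p₂ * exp (α₂ * u))) := by
    refine (ae_restrict_iff' measurableSet_Iic).mpr ?_
    filter_upwards [h0ne] with u hu hmem
    exact hIio_eq u (lt_of_le_of_ne hmem hu)
  have hIntIic : IntegrableOn (fun u => f (s + u) * (u * bgLevyDensity α₁ p₁ α₂ p₂ u))
      (Iic 0) := by
    refine Integrable.congr ?_ haeIic.symm
    exact hniceIio.congr_set_ae (Iio_ae_eq_Iic (a := (0:ℝ))).symm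
  rw [← intervalIntegral.integral_Iic_add_Ioi hIntIic hIntIoi]
  have hIicval : ∫ u in Iic (0:ℝ), f (s + u) * (u * bgLevyDensity α₁ p₁ α₂ p₂ u)
      = -∫ u in Ioi (0:ℝ), f (s - u) * (p₂ * exp (-α₂ * u)) := by
    rw [integral_congr_ae haeIic]
    have h := integral_comp_neg_Iic (0:ℝ) (fun u => -(f (s - u) * (p₂ * exp (-α₂ * u))))
    rw [neg_zero] at h
    rw [show (∫ u in Iic (0:ℝ), -(f (s + u) * (p₂ * exp (α₂ * u))))
        = ∫ u in Iic (0:ℝ), (fun v => -(f (s - v) * (p₂ * exp (-α₂ * v)))) (-u) from by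
      refine integral_congr_ae (ae_of_all _ fun u => ?_)
      simp [sub_eq_add_neg, mul_neg, neg_mul], h, integral_neg]
  rw [hIicval, setIntegral_congr_fun measurableSet_Ioi hIoi_eq]
  ring

end BGStein

open BGStein

/-- **Stein identity for the bilateral gamma distribution.**
If `X ~ BG(α₁, p₁, α₂, p₂)` (realized as `X = X₁ - X₂` with independent gamma variables)
then for every Schwartz function `f`,
`E[X f(X) - ∫_ℝ f(X+u) u ν_bg(du)] = 0`. -/
theorem bilateral_gamma_stein_identity {Ω : Type*} [MeasurableSpace Ω]
    (P : Measure Ω) [IsProbabilityMeasure P]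
    (X₁ X₂ : Ω → ℝ) (hX₁ : Measurable X₁) (hX₂ : Measurable X₂)
    (α₁ α₂ p₁ p₂ : ℝ) (hα₁ : 0 < α₁) (hα₂ : 0 < α₂) (hp₁ : 0 < p₁) (hp₂ : 0 < p₂)
    (hindep : IndepFun X₁ X₂ P)
    (hlaw₁ : P.map X₁ = gammaMeasure p₁ α₁)
    (hlaw₂ : P.map X₂ = gammaMeasure p₂ α₂)
    (f : SchwartzMap ℝ ℝ) :
    ∫ ω, ((X₁ ω - X₂ ω) * f (X₁ ω - X₂ ω)
        - ∫ u : ℝ, f (X₁ ω - X₂ ω + u) * (u * bgLevyDensity α₁ p₁ α₂ p₂ u)) ∂P = 0 := by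
  obtain ⟨C, hCd⟩ := f.decay' 0 0
  have hCb : ∀ x : ℝ, |f x| ≤ C := fun x => by
    have h := hCd x
    exact (by simpa [norm_iteratedFDeriv_zero] using h : |f.toFun x| ≤ C)
  have hC0 : 0 ≤ C := le_trans (abs_nonneg _) (hCb 0)
  haveI h₁ : IsProbabilityMeasure (gammaMeasure p₁ α₁) := isProbabilityMeasure_gammaMeasure hp₁ hα₁
  haveI h₂ : IsProbabilityMeasure (gammaMeasure p₂ α₂) := isProbabilityMeasure_gammaMeasure hp₂ hα₂
  have hfc : Continuous (f : ℝ → ℝ) := f.continuous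
  set G₁ : ℝ → ℝ := fun s => ∫ u in Ioi (0:ℝ), f (s + u) * (p₁ * exp (-α₁ * u)) with hG₁def
  set G₂ : ℝ → ℝ := fun s => ∫ u in Ioi (0:ℝ), f (s - u) * (p₂ * exp (-α₂ * u)) with hG₂def
  have hsplit : ∀ s : ℝ, (∫ u : ℝ, f (s + u) * (u * bgLevyDensity α₁ p₁ α₂ p₂ u))
      = G₁ s - G₂ s := fun s => Gsplit hα₁ hα₂ (f : ℝ → ℝ) hfc C hCb s
  set H : ℝ × ℝ → ℝ := fun z => (z.1 * f (z.1 - z.2) - G₁ (z.1 - z.2))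
      - (z.2 * f (z.1 - z.2) - G₂ (z.1 - z.2)) with hHdef
  have hrw : ∀ ω, (X₁ ω - X₂ ω) * f (X₁ ω - X₂ ω)
      - (∫ u : ℝ, f (X₁ ω - X₂ ω + u) * (u * bgLevyDensity α₁ p₁ α₂ p₂ u))
      = H (X₁ ω, X₂ ω) := by
    intro ω
    rw [hsplit (X₁ ω - X₂ ω), hHdef]
    ring
  rw [integral_congr_ae (ae_of_all _ hrw)]
  -- map to product measure
  have hmap : P.map (fun ω => (X₁ ω, X₂ ω)) = (gammaMeasure p₁ α₁).prod (gammaMeasure p₂ α₂) := by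
    rw [← hlaw₁, ← hlaw₂]
    exact (indepFun_iff_map_prod_eq_prod_map_map hX₁.aemeasurable hX₂.aemeasurable).mp hindep
  -- measurability of G₁ G₂
  have hG₁m : StronglyMeasurable G₁ := by
    have hcont : Continuous (fun q : ℝ × ℝ => f (q.1 + q.2) * (p₁ * exp (-α₁ * q.2))) :=
      (hfc.comp (continuous_fst.add continuous_snd)).mul
        (continuous_const.mul ((continuous_const.mul continuous_snd).rexp))
    exact hcont.stronglyMeasurable.integral_prod_right'
  have hG₂m : StronglyMeasurable G₂ := by
    have hcont : Continuous (fun q : ℝ × ℝ => f (q.1 - q.2) * (p₂ * exp (-α₂ * q.2))) :=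
      (hfc.comp (continuous_fst.sub continuous_snd)).mul
        (continuous_const.mul ((continuous_const.mul continuous_snd).rexp))
    exact hcont.stronglyMeasurable.integral_prod_right'
  have hHm : StronglyMeasurable H := by
    refine StronglyMeasurable.sub (StronglyMeasurable.sub ?_ ?_) (StronglyMeasurable.sub ?_ ?_)
    · exact (continuous_fst.mul (hfc.comp (continuous_fst.sub continuous_snd))).stronglyMeasurable
    · exact hG₁m.comp_measurable (measurable_fst.sub measurable_snd)
    · exact (continuous_snd.mul (hfc.comp (continuous_fst.sub continuous_snd))).stronglyMeasurable
    · exact hG₂m.comp_measurable (measurable_fst.sub measurable_snd)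
  have hstep : ∫ ω, H (X₁ ω, X₂ ω) ∂P
      = ∫ z, H z ∂((gammaMeasure p₁ α₁).prod (gammaMeasure p₂ α₂)) := by
    rw [← hmap]
    exact (integral_map (hX₁.prodMk hX₂).aemeasurable hHm.aestronglyMeasurable).symm
  rw [hstep]
  -- integrability on the product
  have h_id1 : Integrable (fun x : ℝ => x) (gammaMeasure p₁ α₁) := integrable_id_gamma hp₁ hα₁
  have h_id2 : Integrable (fun x : ℝ => x) (gammaMeasure p₂ α₂) := integrable_id_gamma hp₂ hα₂
  have habs1 : Integrable (fun z : ℝ × ℝ => |z.1|)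
      ((gammaMeasure p₁ α₁).prod (gammaMeasure p₂ α₂)) := by
    simpa using h_id1.abs.mul_prod (integrable_const (1:ℝ))
  have habs2 : Integrable (fun z : ℝ × ℝ => |z.2|)
      ((gammaMeasure p₁ α₁).prod (gammaMeasure p₂ α₂)) := by
    simpa using (integrable_const (1:ℝ)).mul_prod h_id2.abs
  set K₁ : ℝ := C * (p₁ * ∫ u in Ioi (0:ℝ), exp (-α₁ * u)) with hK₁def
  set K₂ : ℝ := C * (p₂ * ∫ u in Ioi (0:ℝ), exp (-α₂ * u)) with hK₂def
  have hG₁bd : ∀ s : ℝ, |G₁ s| ≤ K₁ := fun s =>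
    helper_bd hα₁ hp₁.le hC0 (fun u => f (s + u))
      (hfc.comp (continuous_const.add continuous_id)) (fun u => hCb _)
  have hG₂bd : ∀ s : ℝ, |G₂ s| ≤ K₂ := fun s =>
    helper_bd hα₂ hp₂.le hC0 (fun u => f (s - u))
      (hfc.comp (continuous_const.sub continuous_id)) (fun u => hCb _)
  have hT1 : Integrable (fun z : ℝ × ℝ => z.1 * f (z.1 - z.2))
      ((gammaMeasure p₁ α₁).prod (gammaMeasure p₂ α₂)) := by
    refine Integrable.mono' (habs1.const_mul C)
      ((continuous_fst.mul (hfc.comp (continuous_fst.sub continuous_snd))).aestronglyMeasurable)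
      (ae_of_all _ fun z => ?_)
    rw [Real.norm_eq_abs, abs_mul]
    calc |z.1| * |f (z.1 - z.2)| ≤ |z.1| * C :=
          mul_le_mul_of_nonneg_left (hCb _) (abs_nonneg _)
      _ = C * |z.1| := by ring
  have hT2 : Integrable (fun z : ℝ × ℝ => G₁ (z.1 - z.2))
      ((gammaMeasure p₁ α₁).prod (gammaMeasure p₂ α₂)) := by
    refine Integrable.mono' (integrable_const K₁)
      ((hG₁m.comp_measurable (measurable_fst.sub measurable_snd)).aestronglyMeasurable)
      (ae_of_all _ fun z => ?_)
    rw [Real.norm_eq_abs]; exact hG₁bd _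
  have hT3 : Integrable (fun z : ℝ × ℝ => z.2 * f (z.1 - z.2))
      ((gammaMeasure p₁ α₁).prod (gammaMeasure p₂ α₂)) := by
    refine Integrable.mono' (habs2.const_mul C)
      ((continuous_snd.mul (hfc.comp (continuous_fst.sub continuous_snd))).aestronglyMeasurable)
      (ae_of_all _ fun z => ?_)
    rw [Real.norm_eq_abs, abs_mul]
    calc |z.2| * |f (z.1 - z.2)| ≤ |z.2| * C :=
          mul_le_mul_of_nonneg_left (hCb _) (abs_nonneg _)
      _ = C * |z.2| := by ring
  have hT4 : Integrable (fun z : ℝ × ℝ => G₂ (z.1 - z.2))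
      ((gammaMeasure p₁ α₁).prod (gammaMeasure p₂ α₂)) := by
    refine Integrable.mono' (integrable_const K₂)
      ((hG₂m.comp_measurable (measurable_fst.sub measurable_snd)).aestronglyMeasurable)
      (ae_of_all _ fun z => ?_)
    rw [Real.norm_eq_abs]; exact hG₂bd _
  have hH1 : Integrable (fun z : ℝ × ℝ => z.1 * f (z.1 - z.2) - G₁ (z.1 - z.2))
      ((gammaMeasure p₁ α₁).prod (gammaMeasure p₂ α₂)) := hT1.sub hT2
  have hH2 : Integrable (fun z : ℝ × ℝ => z.2 * f (z.1 - z.2) - G₂ (z.1 - z.2))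
      ((gammaMeasure p₁ α₁).prod (gammaMeasure p₂ α₂)) := hT3.sub hT4
  have hHsub : ∫ z, H z ∂((gammaMeasure p₁ α₁).prod (gammaMeasure p₂ α₂))
      = (∫ z : ℝ × ℝ, (z.1 * f (z.1 - z.2) - G₁ (z.1 - z.2))
            ∂((gammaMeasure p₁ α₁).prod (gammaMeasure p₂ α₂)))
        - ∫ z : ℝ × ℝ, (z.2 * f (z.1 - z.2) - G₂ (z.1 - z.2))
            ∂((gammaMeasure p₁ α₁).prod (gammaMeasure p₂ α₂)) := by
    simp only [hHdef]
    rw [integral_sub hH1 hH2]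
  rw [hHsub]
  -- first term vanishes
  have hfirst : (∫ z : ℝ × ℝ, (z.1 * f (z.1 - z.2) - G₁ (z.1 - z.2))
      ∂((gammaMeasure p₁ α₁).prod (gammaMeasure p₂ α₂))) = 0 := by
    rw [integral_prod_symm _ hH1]
    have hinner : ∀ y : ℝ, (∫ x, (x * f (x - y) - G₁ (x - y)) ∂(gammaMeasure p₁ α₁)) = 0 := by
      intro y
      have hgc : Continuous (fun s : ℝ => f (s - y)) :=
        hfc.comp (continuous_id.sub continuous_const)
      have hx1 : Integrable (fun x => x * f (x - y)) (gammaMeasure p₁ α₁) := by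
        refine (Integrable.bdd_mul (f := fun x : ℝ => f (x - y)) (c := C) h_id1
          hgc.aestronglyMeasurable (ae_of_all _ fun x => by
            rw [Real.norm_eq_abs]; exact hCb _)).congr (ae_of_all _ fun x => by ring)
      have hx2 : Integrable (fun x => G₁ (x - y)) (gammaMeasure p₁ α₁) := by
        refine Integrable.mono' (integrable_const K₁)
          ((hG₁m.comp_measurable (measurable_id.sub measurable_const)).aestronglyMeasurable)
          (ae_of_all _ fun x => ?_)
        rw [Real.norm_eq_abs]; exact hG₁bd _
      rw [integral_sub hx1 hx2, sub_eq_zero]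
      have hst := gamma_stein hp₁ hα₁ (fun s => f (s - y)) hgc C (fun x => hCb _)
      rw [hst]
      refine integral_congr_ae (ae_of_all _ fun x => ?_)
      refine integral_congr_ae (ae_of_all _ fun u => ?_)
      simp only [sub_add_eq_add_sub]
    calc (∫ y, ∫ x, (x * f (x - y) - G₁ (x - y)) ∂(gammaMeasure p₁ α₁) ∂(gammaMeasure p₂ α₂))
        = ∫ y, (0:ℝ) ∂(gammaMeasure p₂ α₂) :=
          integral_congr_ae (ae_of_all _ fun y => hinner y)
      _ = 0 := integral_zero _ _
  have hsecond : (∫ z : ℝ × ℝ, (z.2 * f (z.1 - z.2) - G₂ (z.1 - z.2))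
      ∂((gammaMeasure p₁ α₁).prod (gammaMeasure p₂ α₂))) = 0 := by
    rw [integral_prod _ hH2]
    have hinner : ∀ x : ℝ, (∫ y, (y * f (x - y) - G₂ (x - y)) ∂(gammaMeasure p₂ α₂)) = 0 := by
      intro x
      have hgc : Continuous (fun s : ℝ => f (x - s)) :=
        hfc.comp (continuous_const.sub continuous_id)
      have hy1 : Integrable (fun y => y * f (x - y)) (gammaMeasure p₂ α₂) := by
        refine (Integrable.bdd_mul (f := fun y : ℝ => f (x - y)) (c := C) h_id2
          hgc.aestronglyMeasurable (ae_of_all _ fun y => by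
            rw [Real.norm_eq_abs]; exact hCb _)).congr (ae_of_all _ fun y => by ring)
      have hy2 : Integrable (fun y => G₂ (x - y)) (gammaMeasure p₂ α₂) := by
        refine Integrable.mono' (integrable_const K₂)
          ((hG₂m.comp_measurable (measurable_const.sub measurable_id)).aestronglyMeasurable)
          (ae_of_all _ fun y => ?_)
        rw [Real.norm_eq_abs]; exact hG₂bd _
      rw [integral_sub hy1 hy2, sub_eq_zero]
      have hst := gamma_stein hp₂ hα₂ (fun s => f (x - s)) hgc C (fun y => hCb _)
      rw [hst]
      refine integral_congr_ae (ae_of_all _ fun y => ?_)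
      refine integral_congr_ae (ae_of_all _ fun u => ?_)
      simp only [sub_add_eq_sub_sub]
    calc (∫ x, ∫ y, (y * f (x - y) - G₂ (x - y)) ∂(gammaMeasure p₂ α₂) ∂(gammaMeasure p₁ α₁))
        = ∫ x, (0:ℝ) ∂(gammaMeasure p₁ α₁) :=
          integral_congr_ae (ae_of_all _ fun x => hinner x)
      _ = 0 := integral_zero _ _
  rw [hfirst, hsecond, sub_zero]
end

section
/- Let φ_bg be the characteristic function of a bilateral gamma BG(α₁, p₁, α₂, p₂) distribution and let ν_bg be its Lévy measure. Then φ_bg is differentiable and φ_bg′(z) = i φ_bg(z) ∫_ℝ u e^{izu} ν_bg(du) for all z ∈ ℝ. -/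
open MeasureTheory Set Filter
open scoped Topology

lemma tendsto_cexp_mul_atTop {c : ℂ} (hc : c.re < 0) :
    Tendsto (fun x : ℝ => Complex.exp (c * x)) atTop (𝓝 0) := by
  rw [tendsto_zero_iff_norm_tendsto_zero]
  have h1 : Tendsto (fun x : ℝ => c.re * x) atTop atBot :=
    tendsto_id.const_mul_atTop_of_neg hc
  refine (Real.tendsto_exp_atBot.comp h1).congr fun x => ?_
  simp [Complex.norm_exp, Complex.mul_re]

lemma integrableOn_cexp_mul_Ioi {c : ℂ} (hc : c.re < 0) :
    IntegrableOn (fun x : ℝ => Complex.exp (c * x)) (Ioi (0:ℝ)) := by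
  refine (exp_neg_integrableOn_Ioi 0 (neg_pos.mpr hc)).mono' ?_ ?_
  · exact (Complex.continuous_exp.comp (by fun_prop)).aestronglyMeasurable
  · filter_upwards with x
    simp [Complex.norm_exp, Complex.mul_re]

lemma integral_cexp_mul_Ioi {c : ℂ} (hc : c.re < 0) :
    ∫ x in Ioi (0:ℝ), Complex.exp (c * x) = -c⁻¹ := by
  have hc0 : c ≠ 0 := fun h => by simp [h] at hc
  have hderiv : ∀ x ∈ Ici (0:ℝ),
      HasDerivAt (fun x : ℝ => Complex.exp (c * x) / c) (Complex.exp (c * x)) x := by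
    intro x _
    have h1 : HasDerivAt (fun w : ℂ => Complex.exp (c * w) / c) (Complex.exp (c * x)) (x : ℂ) := by
      have := (((hasDerivAt_id (x:ℂ)).const_mul c).cexp).div_const c
      simpa [mul_one, mul_div_cancel_right₀ _ hc0] using this
    exact h1.comp_ofReal
  have := integral_Ioi_of_hasDerivAt_of_tendsto' hderiv (integrableOn_cexp_mul_Ioi hc)
    (((tendsto_cexp_mul_atTop hc).div_const c))
  simpa [div_eq_mul_inv] using this

lemma integrableOn_cexp_mul_Iic {c : ℂ} (hc : 0 < c.re) :
    IntegrableOn (fun x : ℝ => Complex.exp (c * x)) (Iic (0:ℝ)) := by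
  have A : MeasurableEmbedding fun x : ℝ => -x :=
    (Homeomorph.neg ℝ).isClosedEmbedding.measurableEmbedding
  have h1 : IntegrableOn (fun x : ℝ => Complex.exp (-c * x)) (Ioi (0:ℝ)) :=
    integrableOn_cexp_mul_Ioi (by simpa using hc)
  have h2 : IntegrableOn (fun x : ℝ => Complex.exp (c * x)) (Iio (0:ℝ)) := by
    have h3 : IntegrableOn (fun x : ℝ => Complex.exp (-c * x)) (Ioi (0:ℝ))
        (Measure.map (fun x : ℝ => -x) volume) := by
      rwa [Measure.map_neg_eq_self]
    rw [IntegrableOn, Measure.restrict_map A.measurable measurableSet_Ioi,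
      A.integrable_map_iff] at h3
    have : (fun x : ℝ => -x) ⁻¹' Ioi (0:ℝ) = Iio 0 := by ext x; simp
    rw [this] at h3
    refine IntegrableOn.congr_fun h3 (fun x _ => ?_) measurableSet_Iio
    show Complex.exp (-c * ((-x : ℝ) : ℂ)) = Complex.exp (c * x)
    congr 1; push_cast; ring
  rwa [IntegrableOn, ← Measure.restrict_congr_set Iio_ae_eq_Iic]

lemma integral_cexp_mul_Iic {c : ℂ} (hc : 0 < c.re) :
    ∫ x in Iic (0:ℝ), Complex.exp (c * x) = c⁻¹ := by
  have h : ∀ x : ℝ, Complex.exp (c * x) = (fun y : ℝ => Complex.exp (-c * y)) (-x) := by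
    intro x; simp only; congr 1; push_cast; ring
  simp_rw [h]
  rw [integral_comp_neg_Iic (0:ℝ) (fun y : ℝ => Complex.exp (-c * y)), neg_zero,
    integral_cexp_mul_Ioi (show (-c).re < 0 by simpa using hc)]
  rw [inv_neg, neg_neg]

/-- Characteristic function of the bilateral gamma distribution `BG(α₁, p₁, α₂, p₂)`. -/
noncomputable def bgCharFun (α₁ p₁ α₂ p₂ : ℝ) (z : ℝ) : ℂ :=
  ((α₁ : ℂ) / (α₁ - z * Complex.I)) ^ (p₁ : ℂ)
    * ((α₂ : ℂ) / (α₂ + z * Complex.I)) ^ (p₂ : ℂ)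

lemma bg_integral (α₁ α₂ p₁ p₂ : ℝ)
    (hα₁ : 0 < α₁) (hα₂ : 0 < α₂) (hp₁ : 0 < p₁) (hp₂ : 0 < p₂) (z : ℝ) :
    (∫ u : ℝ, (u : ℂ) * Complex.exp (Complex.I * z * u) * (bgLevyDensity α₁ p₁ α₂ p₂ u : ℝ))
      = (p₁ : ℂ) * ((α₁ : ℂ) - z * Complex.I)⁻¹ - (p₂ : ℂ) * ((α₂ : ℂ) + z * Complex.I)⁻¹ := by
  set f : ℝ → ℂ := fun u =>
    (u : ℂ) * Complex.exp (Complex.I * z * u) * (bgLevyDensity α₁ p₁ α₂ p₂ u : ℝ) with hf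
  set c₁ : ℂ := Complex.I * z - α₁ with hc₁def
  set c₂ : ℂ := Complex.I * z + α₂ with hc₂def
  have hc₁ : c₁.re < 0 := by
    simp only [hc₁def, Complex.sub_re, Complex.mul_re, Complex.I_re, Complex.I_im,
      Complex.ofReal_re, Complex.ofReal_im]
    simp; linarith
  have hc₂ : 0 < c₂.re := by
    simp only [hc₂def, Complex.add_re, Complex.mul_re, Complex.I_re, Complex.I_im,
      Complex.ofReal_re, Complex.ofReal_im]
    simp; linarith
  have hIoi : Set.EqOn f (fun u : ℝ => (p₁ : ℂ) * Complex.exp (c₁ * u)) (Set.Ioi 0) := by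
    intro u hu
    have hu' : (0:ℝ) < u := hu
    have hu0 : (u : ℂ) ≠ 0 := by exact_mod_cast hu'.ne'
    simp only [hf, bgLevyDensity, if_pos hu']
    push_cast
    have : (u:ℂ) * Complex.exp (Complex.I * z * u) * ((p₁:ℂ)/u * Complex.exp (-(α₁:ℂ) * u))
        = (p₁ : ℂ) * (Complex.exp (Complex.I * z * u) * Complex.exp (-(α₁:ℂ) * u)) := by
      field_simp
    rw [this, ← Complex.exp_add]
    congr 1
    push_cast [hc₁def]; ring
  have hIio : Set.EqOn f (fun u : ℝ => -(p₂ : ℂ) * Complex.exp (c₂ * u)) (Set.Iio 0) := by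
    intro u hu
    have hu' : u < 0 := hu
    have hu0 : (u : ℂ) ≠ 0 := by exact_mod_cast hu'.ne
    simp only [hf, bgLevyDensity, if_neg (not_lt.mpr hu'.le), if_pos hu', abs_of_neg hu']
    push_cast
    have : (u:ℂ) * Complex.exp (Complex.I * z * u) * (-((p₂:ℂ)/u * Complex.exp (-(α₂:ℂ) * -u)))
        = -(p₂ : ℂ) * (Complex.exp (Complex.I * z * u) * Complex.exp (-(α₂:ℂ) * -u)) := by
      field_simp
    rw [this, ← Complex.exp_add]
    congr 1
    push_cast [hc₂def]; ring
  have hi₁ : IntegrableOn f (Set.Ioi 0) :=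
    IntegrableOn.congr_fun ((integrableOn_cexp_mul_Ioi hc₁).const_mul (p₁ : ℂ))
      hIoi.symm measurableSet_Ioi
  have hi₂' : IntegrableOn f (Set.Iio 0) :=
    IntegrableOn.congr_fun
      (((integrableOn_cexp_mul_Iic hc₂).mono_set Set.Iio_subset_Iic_self).const_mul (-(p₂ : ℂ)))
      hIio.symm measurableSet_Iio
  have hi₂ : IntegrableOn f (Set.Iic 0) := by
    rwa [IntegrableOn, ← Measure.restrict_congr_set Iio_ae_eq_Iic]
  have e₁ : ∫ u in Set.Ioi (0:ℝ), f u = (p₁ : ℂ) * -c₁⁻¹ := by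
    rw [setIntegral_congr_fun measurableSet_Ioi hIoi, integral_const_mul, integral_cexp_mul_Ioi hc₁]
  have e₂ : ∫ u in Set.Iic (0:ℝ), f u = -(p₂ : ℂ) * c₂⁻¹ := by
    rw [integral_Iic_eq_integral_Iio, setIntegral_congr_fun measurableSet_Iio hIio,
      integral_const_mul, ← integral_Iic_eq_integral_Iio, integral_cexp_mul_Iic hc₂]
  have hsplit := intervalIntegral.integral_Iic_add_Ioi (μ := volume) (b := (0:ℝ)) hi₂ hi₁
  rw [← hsplit, e₁, e₂]
  have h₁ : -c₁⁻¹ = ((α₁ : ℂ) - z * Complex.I)⁻¹ := by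
    rw [← inv_neg]; congr 1; rw [hc₁def]; ring
  have h₂ : c₂ = (α₂ : ℂ) + z * Complex.I := by rw [hc₂def]; ring
  rw [h₁, h₂]; ring

lemma hasDerivAt_bgFactor (α p : ℝ) (hα : 0 < α) (j : ℂ)
    (hj : j = Complex.I ∨ j = -Complex.I) (z : ℝ) :
    HasDerivAt (fun t : ℝ => ((α : ℂ) / (α - t * j)) ^ (p : ℂ))
      (((α : ℂ) / (α - z * j)) ^ (p : ℂ) * ((p : ℂ) * j * ((α : ℂ) - z * j)⁻¹)) z := by
  have hα0 : (α : ℂ) ≠ 0 := by exact_mod_cast hα.ne'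
  have hjre : j.re = 0 := by rcases hj with h | h <;> simp [h]
  have hdne : (α : ℂ) - z * j ≠ 0 := by
    intro h
    have := congrArg Complex.re h
    simp [Complex.sub_re, Complex.mul_re, hjre] at this
    exact absurd this hα.ne'
  have hd : HasDerivAt (fun w : ℂ => (α : ℂ) - w * j) (-j) (z : ℂ) := by
    simpa using ((hasDerivAt_id (z : ℂ)).mul_const j).const_sub (α : ℂ)
  have hq : HasDerivAt (fun w : ℂ => (α : ℂ) / (α - w * j))
      ((α * j) / ((α : ℂ) - z * j) ^ 2) (z : ℂ) := by
    have h := (hasDerivAt_const (z : ℂ) (α : ℂ)).div hd hdne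
    refine h.congr_deriv ?_
    ring
  have hslit : (α : ℂ) / ((α : ℂ) - z * j) ∈ Complex.slitPlane := by
    rw [Complex.mem_slitPlane_iff]
    left
    rw [Complex.div_re]
    have hre : ((α : ℂ) - z * j).re = α := by
      simp [Complex.sub_re, Complex.mul_re, hjre]
    have him : ((α : ℂ)).im = 0 := by simp
    rw [hre, him]
    simp only [Complex.ofReal_re, Complex.ofReal_im, zero_mul, add_zero, zero_div]
    exact div_pos (mul_pos hα hα) (Complex.normSq_pos.mpr hdne)
  have hne' : (α : ℂ) / ((α : ℂ) - z * j) ≠ 0 := div_ne_zero hα0 hdne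
  have h := (hq.cpow_const (c := (p : ℂ)) hslit).comp_ofReal
  convert h using 1
  rw [Complex.cpow_sub _ _ hne', Complex.cpow_one]
  field_simp

/-- **Derivative of the bilateral gamma characteristic function.**
`φ_bg` is differentiable with `φ_bg′(z) = i φ_bg(z) ∫_ℝ u e^{izu} ν_bg(du)` for all real `z`. -/
theorem bgCharFun_hasDerivAt (α₁ α₂ p₁ p₂ : ℝ)
    (hα₁ : 0 < α₁) (hα₂ : 0 < α₂) (hp₁ : 0 < p₁) (hp₂ : 0 < p₂) :
    ∀ z : ℝ,
      HasDerivAt (fun t : ℝ => bgCharFun α₁ p₁ α₂ p₂ t)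
        (Complex.I * bgCharFun α₁ p₁ α₂ p₂ z *
          ∫ u : ℝ, (u : ℂ) * Complex.exp (Complex.I * z * u) * (bgLevyDensity α₁ p₁ α₂ p₂ u : ℝ))
        z := by
  intro z
  have h₁ := hasDerivAt_bgFactor α₁ p₁ hα₁ Complex.I (Or.inl rfl) z
  have h₂' := hasDerivAt_bgFactor α₂ p₂ hα₂ (-Complex.I) (Or.inr rfl) z
  have e : ∀ t : ℝ, (α₂ : ℂ) - t * -Complex.I = (α₂ : ℂ) + t * Complex.I := fun t => by ring
  have h₂ : HasDerivAt (fun t : ℝ => ((α₂ : ℂ) / (α₂ + t * Complex.I)) ^ (p₂ : ℂ))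
      (((α₂ : ℂ) / (α₂ + z * Complex.I)) ^ (p₂ : ℂ) *
        ((p₂ : ℂ) * -Complex.I * ((α₂ : ℂ) + z * Complex.I)⁻¹)) z := by
    simpa only [e] using h₂'
  have hmul := h₁.mul h₂
  rw [bg_integral α₁ α₂ p₁ p₂ hα₁ hα₂ hp₁ hp₂ z]
  unfold bgCharFun
  refine hmul.congr_deriv ?_
  ring
end

section
/- Let G = I₂(f) with f ∈ H^{⊙2}. Then for all m, p ≥ 1, E[Γ_m(G) Γ_p(G)] = κ_{m+p}(G)/(m+p-1)! + κ_m(G)κ_p(G)/((m-1)!(p-1)!). -/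
open MeasureTheory

/-- **Product formula for Gamma-operators on the second Wiener chaos.**
Let `G = I₂(f)`, `f ∈ H^{⊙2}`, with Gamma-operators `Γ_m` and cumulants `κ_m` satisfying
`κ_m(G) = (m-1)! E[Γ_m(G)]`.  With `c j = f ⊗₁^{(j)} f` the iterated `1`-contractions
(`c 1 = f`), the representation `I₂(c j) = 2^{-(j-1)}(Γ_j(G) - E Γ_j(G))`, the isometry
`E[I₂(g)I₂(h)] = 2⟨g,h⟩`, the contraction identity `⟨c m, c p⟩ = ⟨c (m+p-1), c 1⟩` and
`κ_p(G) = 2^{p-1}(p-1)!⟨c (p-1), c 1⟩` hold.  Then for all `m, p ≥ 1`,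
`E[Γ_m(G) Γ_p(G)] = κ_{m+p}(G)/(m+p-1)! + κ_m(G)κ_p(G)/((m-1)!(p-1)!)`. -/
theorem second_chaos_gamma_product {Ω : Type*} [MeasurableSpace Ω]
    (P : Measure Ω) [IsProbabilityMeasure P]
    {H : Type*} [NormedAddCommGroup H] [InnerProductSpace ℝ H]
    (G : Ω → ℝ) (I2 : H → Ω → ℝ) (f : H) (c : ℕ → H) (Γ : ℕ → Ω → ℝ) (κ : ℕ → ℝ)
    (hG : G = I2 f) (hc₁ : c 1 = f)
    (hintΓ : ∀ m, Integrable (Γ m) P)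
    (hintΓΓ : ∀ m p, Integrable (fun ω => Γ m ω * Γ p ω) P)
    (hIso : ∀ g h : H, ∫ ω, I2 g ω * I2 h ω ∂P = 2 * (inner ℝ g h : ℝ))
    (hRep : ∀ j : ℕ, 1 ≤ j → ∀ ω,
      I2 (c j) ω = (Γ j ω - ∫ ω', Γ j ω' ∂P) / 2 ^ (j - 1))
    (hContr : ∀ m p : ℕ, 1 ≤ m → 1 ≤ p → (inner ℝ (c m) (c p) : ℝ) = inner ℝ (c (m + p - 1)) (c 1))
    (hκΓ : ∀ m : ℕ, 1 ≤ m → κ m = (Nat.factorial (m - 1) : ℝ) * ∫ ω, Γ m ω ∂P)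
    (hκc : ∀ p : ℕ, 2 ≤ p →
      κ p = 2 ^ (p - 1) * (Nat.factorial (p - 1) : ℝ) * (inner ℝ (c (p - 1)) (c 1) : ℝ)) :
    ∀ m p : ℕ, 1 ≤ m → 1 ≤ p →
      ∫ ω, Γ m ω * Γ p ω ∂P
        = κ (m + p) / (Nat.factorial (m + p - 1) : ℝ)
          + κ m * κ p / ((Nat.factorial (m - 1) : ℝ) * (Nat.factorial (p - 1) : ℝ)) := by
  intro m p hm hp
  set A : ℝ := ∫ ω, Γ m ω ∂P with hA
  set B : ℝ := ∫ ω, Γ p ω ∂P with hB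
  set I : ℝ := (inner ℝ (c (m + p - 1)) (c 1) : ℝ) with hI
  -- expand the centered product integral
  have expand : ∫ ω, (Γ m ω - A) * (Γ p ω - B) ∂P
      = (∫ ω, Γ m ω * Γ p ω ∂P) - A * B := by
    have h2 : (fun ω => (Γ m ω - A) * (Γ p ω - B))
        = fun ω => (Γ m ω * Γ p ω - A * Γ p ω) - (B * Γ m ω - A * B) := by
      funext ω; ring
    have i1 : Integrable (fun ω => Γ m ω * Γ p ω - A * Γ p ω) P :=
      (hintΓΓ m p).sub ((hintΓ p).const_mul A)
    have i2 : Integrable (fun ω => B * Γ m ω - A * B) P :=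
      ((hintΓ m).const_mul B).sub (integrable_const (A * B))
    rw [h2, integral_sub i1 i2,
      integral_sub (hintΓΓ m p) ((hintΓ p).const_mul A),
      integral_sub ((hintΓ m).const_mul B) (integrable_const (A * B)),
      MeasureTheory.integral_const_mul, MeasureTheory.integral_const_mul, integral_const]
    simp [← hA, ← hB]
    ring
  have key : ((∫ ω, Γ m ω * Γ p ω ∂P) - A * B) / (2 ^ (m - 1) * 2 ^ (p - 1))
      = 2 * I := by
    rw [hI, ← hContr m p hm hp, ← hIso, ← expand, ← integral_div]
    apply integral_congr_ae
    filter_upwards with ω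
    rw [hRep m hm ω, hRep p hp ω, ← hA, ← hB]
    field_simp
  have hne : (2 : ℝ) ^ (m - 1) * 2 ^ (p - 1) ≠ 0 := by positivity
  rw [div_eq_iff hne] at key
  have hpow : (2 : ℝ) ^ (m - 1) * 2 ^ (p - 1) * 2 = 2 ^ (m + p - 1) := by
    rw [← pow_add, ← pow_succ]
    congr 1
    omega
  have hX : ∫ ω, Γ m ω * Γ p ω ∂P = 2 ^ (m + p - 1) * I + A * B := by
    rw [← hpow]; linarith [key]
  have hκmp := hκc (m + p) (by omega)
  have hκm := hκΓ m hm
  have hκp := hκΓ p hp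
  rw [hX, hκmp, hκm, hκp, ← hA, ← hB, ← hI]
  have hf1 : ((m + p - 1).factorial : ℝ) ≠ 0 := Nat.cast_ne_zero.mpr (Nat.factorial_ne_zero _)
  have hf2 : ((m - 1).factorial : ℝ) ≠ 0 := Nat.cast_ne_zero.mpr (Nat.factorial_ne_zero _)
  have hf3 : ((p - 1).factorial : ℝ) ≠ 0 := Nat.cast_ne_zero.mpr (Nat.factorial_ne_zero _)
  field_simp
end

section
/- Let G_n = I₂(f_n), f_n ∈ H^{⊙2}, and Z_α ~ N(0, α²) with α > 1. Then d₃(G_n, Z_α) ≤ (1/3)(κ₆(G_n)/120 + κ₃(G_n)²/4)^{1/2} + (1/2)|α² - κ₂(G_n)|. Consequently, if κ₂(G_n) → α² and κ₃(G_n) → 0, κ₆(G_n) → 0, then G_n converges in distribution to Z_α. -/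
open MeasureTheory ProbabilityTheory Filter Set Manifold
open scoped ENNReal NNReal

/-- The class `W_r` of `r`-times differentiable functions `h : ℝ → ℝ` with
`‖h^{(k)}‖_∞ ≤ 1` for `k = 0, 1, …, r`. -/
def smoothClass (r : ℕ) : Set (ℝ → ℝ) :=
  {h | (∀ k < r, Differentiable ℝ (iteratedDeriv k h)) ∧
    ∀ k ≤ r, ∀ x : ℝ, |iteratedDeriv k h x| ≤ 1}

/-- The smooth Wasserstein distance `d_r(Y, Z) = sup_{h ∈ W_r} |E h(Y) - E h(Z)|`. -/
noncomputable def dSmooth {Ω : Type*} [MeasurableSpace Ω] (P : Measure Ω)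
    (Y Z : Ω → ℝ) (r : ℕ) : ℝ :=
  sSup {d | ∃ h ∈ smoothClass r, d = |(∫ ω, h (Y ω) ∂P) - ∫ ω, h (Z ω) ∂P|}

lemma cs_abs {Ω : Type*} [MeasurableSpace Ω] (P : Measure Ω) [IsProbabilityMeasure P]
    (f : Ω → ℝ) (hm : AEStronglyMeasurable f P) (hsq : Integrable (fun ω => f ω ^ 2) P) :
    ∫ ω, |f ω| ∂P ≤ Real.sqrt (∫ ω, f ω ^ 2 ∂P) := by
  have hmem : MemLp f 2 P := (memLp_two_iff_integrable_sq hm).mpr hsq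
  have h2 : (2:ℝ).HolderConjugate 2 := by constructor <;> norm_num
  have H := integral_mul_le_Lp_mul_Lq_of_nonneg (μ := P) h2
    (f := fun ω => |f ω|) (g := fun _ => (1:ℝ))
    (Filter.Eventually.of_forall fun _ => abs_nonneg _)
    (Filter.Eventually.of_forall fun _ => zero_le_one)
    (by rw [ENNReal.ofReal_ofNat]; exact hmem.abs) (by simpa using memLp_const (1:ℝ))
  have e1 : (fun ω => |f ω| ^ (2:ℝ)) = fun ω => f ω ^ 2 := funext fun ω => by
    rw [show ((2:ℝ)) = ((2:ℕ):ℝ) by norm_num, Real.rpow_natCast, sq_abs]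
  have e2 : ∫ _ω : Ω, (1:ℝ) ^ (2:ℝ) ∂P = 1 := by simp
  simp only [mul_one] at H
  rw [show (∫ a, |f a| ^ (2:ℝ) ∂P) = ∫ ω, f ω ^ 2 ∂P from by rw [e1], e2] at H
  calc ∫ ω, |f ω| ∂P ≤ (∫ ω, f ω ^ 2 ∂P) ^ (1/(2:ℝ)) * 1 ^ (1/(2:ℝ)) := H
    _ = Real.sqrt (∫ ω, f ω ^ 2 ∂P) := by
        rw [Real.one_rpow, mul_one, ← Real.sqrt_eq_rpow]

lemma gaussian_mean_zero (v : ℝ≥0) : ∫ x, x ∂(gaussianReal 0 v) = 0 := by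
  have hmap : (gaussianReal 0 v).map ((-1 : ℝ) * ·) = gaussianReal 0 v := by
    rw [gaussianReal_map_const_mul]
    congr 1
    · ring
    · ext; simp
  have h := integral_map (μ := gaussianReal 0 v) (φ := ((-1:ℝ) * ·)) (f := fun x => x)
    ((measurable_id.const_mul (-1)).aemeasurable) aestronglyMeasurable_id
  rw [hmap] at h
  have h2 : ∫ x, (-1 : ℝ) * x ∂(gaussianReal 0 v) = -∫ x, x ∂(gaussianReal 0 v) := by
    simp only [neg_one_mul]; exact integral_neg _
  rw [h2] at h
  linarith

lemma zero_mem_smoothClass (r : ℕ) : (fun _ : ℝ => (0:ℝ)) ∈ smoothClass r := by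
  have hz : ∀ k : ℕ, iteratedDeriv k (fun _ : ℝ => (0:ℝ)) = fun _ => 0 := by
    intro k; induction k with
    | zero => simp [iteratedDeriv_zero]
    | succ n ih => rw [iteratedDeriv_succ, ih]; simp [deriv_const]
  exact ⟨fun k _ => by rw [hz]; exact differentiable_const 0,
    fun k _ x => by rw [hz]; simp⟩

lemma bddAbove_dset {Ω : Type*} [MeasurableSpace Ω] (P : Measure Ω) [IsProbabilityMeasure P]
    (Y Z : Ω → ℝ) (r : ℕ) :
    BddAbove {d | ∃ h ∈ smoothClass r, d = |(∫ ω, h (Y ω) ∂P) - ∫ ω, h (Z ω) ∂P|} := by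
  refine ⟨2, ?_⟩
  rintro d ⟨h, hh, rfl⟩
  have hb : ∀ W : Ω → ℝ, ‖∫ ω, h (W ω) ∂P‖ ≤ 1 := by
    intro W
    have := norm_integral_le_of_norm_le_const (μ := P) (f := fun ω => h (W ω)) (C := 1)
      (Filter.Eventually.of_forall fun ω => by
        simpa [Real.norm_eq_abs] using hh.2 0 (Nat.zero_le r) (W ω))
    simpa using this
  calc |(∫ ω, h (Y ω) ∂P) - ∫ ω, h (Z ω) ∂P| ≤ ‖∫ ω, h (Y ω) ∂P‖ + ‖∫ ω, h (Z ω) ∂P‖ :=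
        abs_sub _ _
    _ ≤ 2 := by linarith [hb Y, hb Z]

lemma dSmooth_nonneg {Ω : Type*} [MeasurableSpace Ω] (P : Measure Ω) [IsProbabilityMeasure P]
    (Y Z : Ω → ℝ) (r : ℕ) : 0 ≤ dSmooth P Y Z r := by
  refine le_csSup (bddAbove_dset P Y Z r) ⟨fun _ => 0, zero_mem_smoothClass r, by simp⟩

lemma abs_diff_le_dSmooth {Ω : Type*} [MeasurableSpace Ω] (P : Measure Ω) [IsProbabilityMeasure P]
    (Y Z : Ω → ℝ) (r : ℕ) {h : ℝ → ℝ} (hh : h ∈ smoothClass r) :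
    |(∫ ω, h (Y ω) ∂P) - ∫ ω, h (Z ω) ∂P| ≤ dSmooth P Y Z r :=
  le_csSup (bddAbove_dset P Y Z r) ⟨h, hh, rfl⟩

lemma tendsto_integral_comp {Ω : Type*} [MeasurableSpace Ω] (P : Measure Ω)
    [IsProbabilityMeasure P] (G : ℕ → Ω → ℝ) (Z : Ω → ℝ)
    (hd : Tendsto (fun n => dSmooth P (G n) Z 3) atTop (nhds 0))
    (φ : ℝ → ℝ) (hφ : ContDiff ℝ (⊤ : ℕ∞) φ) (M : ℝ)
    (hM : ∀ k ≤ 3, ∀ x, |iteratedDeriv k φ x| ≤ M) :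
    Tendsto (fun n => ∫ ω, φ (G n ω) ∂P) atTop (nhds (∫ ω, φ (Z ω) ∂P)) := by
  set c : ℝ := max M 1 with hc
  have hc1 : (1:ℝ) ≤ c := le_max_right _ _
  have hcpos : (0:ℝ) < c := lt_of_lt_of_le one_pos hc1
  set h : ℝ → ℝ := fun x => c⁻¹ * φ x with hhdef
  have hiter : ∀ (k : ℕ), iteratedDeriv k h = fun x => c⁻¹ * iteratedDeriv k φ x := by
    intro k
    funext x
    have hsm : h = c⁻¹ • φ := by funext y; simp [hhdef]
    rw [hsm, iteratedDeriv_eq_iteratedFDeriv, iteratedDeriv_eq_iteratedFDeriv,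
      iteratedFDeriv_const_smul_apply (hφ.of_le (m := k) (by exact_mod_cast le_top)).contDiffAt]
    simp
  have hmem : h ∈ smoothClass 3 := by
    constructor
    · intro k _
      rw [hiter]
      exact (hφ.differentiable_iteratedDeriv k (by exact_mod_cast WithTop.coe_lt_top _)).const_mul
        c⁻¹
    · intro k hk x
      rw [hiter]
      have habs : |c⁻¹ * iteratedDeriv k φ x| = c⁻¹ * |iteratedDeriv k φ x| := by
        rw [abs_mul, abs_of_nonneg (inv_nonneg.mpr hcpos.le)]
      simp only [habs]
      calc c⁻¹ * |iteratedDeriv k φ x| ≤ c⁻¹ * c :=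
            mul_le_mul_of_nonneg_left (le_trans (hM k hk x) (le_max_left _ _))
              (inv_nonneg.mpr hcpos.le)
        _ = 1 := inv_mul_cancel₀ hcpos.ne'
  have key : Tendsto (fun n => ∫ ω, h (G n ω) ∂P) atTop (nhds (∫ ω, h (Z ω) ∂P)) := by
    rw [tendsto_iff_dist_tendsto_zero]
    exact squeeze_zero (fun n => dist_nonneg)
      (fun n => by rw [Real.dist_eq]; exact abs_diff_le_dSmooth P (G n) Z 3 hmem) hd
  have e : ∀ W : Ω → ℝ, ∫ ω, h (W ω) ∂P = c⁻¹ * ∫ ω, φ (W ω) ∂P := by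
    intro W; simp only [hhdef]; exact integral_const_mul c⁻¹ _
  simp only [e] at key
  have key2 := key.const_mul c
  simpa [← mul_assoc, mul_inv_cancel₀ hcpos.ne'] using key2
lemma smooth_urysohn {K U : Set ℝ} (hK : IsCompact K) (hU : IsOpen U) (hKU : K ⊆ U) :
    ∃ φ : ℝ → ℝ, ContDiff ℝ (⊤ : ℕ∞) φ ∧ HasCompactSupport φ ∧ (∀ x, φ x ∈ Set.Icc (0:ℝ) 1) ∧
      Set.EqOn φ 1 K ∧ ∀ x ∉ U, φ x = 0 := by
  obtain ⟨R, hR⟩ := hK.isBounded.subset_ball 0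
  set s : Set ℝ := Uᶜ ∪ (Metric.ball (0:ℝ) R)ᶜ with hs
  have hsc : IsClosed s := (hU.isClosed_compl).union (Metric.isOpen_ball.isClosed_compl)
  have hdisj : Disjoint s K := by
    rw [disjoint_union_left]
    constructor
    · exact disjoint_compl_left_iff_subset.mpr hKU
    · exact disjoint_compl_left_iff_subset.mpr hR
  obtain ⟨f, hf0, hf1, hf01⟩ :=
    exists_contMDiffMap_zero_one_of_isClosed (n := ⊤) (𝓘(ℝ, ℝ)) hsc hK.isClosed hdisj
  refine ⟨f, ?_, ?_, hf01, hf1, fun x hx => hf0 (Or.inl hx)⟩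
  · exact contMDiff_iff_contDiff.mp f.contMDiff
  · have hsupp : Function.support f ⊆ Metric.ball 0 R := by
      intro x hx
      by_contra hxB
      exact hx (hf0 (Or.inr hxB))
    have : tsupport f ⊆ Metric.closedBall 0 R :=
      (closure_mono hsupp).trans Metric.closure_ball_subset_closedBall
    exact IsCompact.of_isClosed_subset (isCompact_closedBall 0 R) (isClosed_tsupport _) this

lemma deriv_bound (φ : ℝ → ℝ) (hφ : ContDiff ℝ (⊤ : ℕ∞) φ) (hsupp : HasCompactSupport φ) :
    ∃ M : ℝ, ∀ k ≤ 3, ∀ x, |iteratedDeriv k φ x| ≤ M := by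
  have H : ∀ k : ℕ, ∃ C, ∀ x, |iteratedDeriv k φ x| ≤ C := by
    intro k
    have hcont : Continuous (iteratedDeriv k φ) := hφ.continuous_iteratedDeriv k (mod_cast le_top)
    have hks : HasCompactSupport (iteratedDeriv k φ) := by
      have h1 : Function.support (iteratedDeriv k φ) ⊆ tsupport φ := by
        intro x hx
        by_contra hxt
        apply hx
        rw [iteratedDeriv_eq_iteratedFDeriv]
        have : iteratedFDeriv ℝ k φ x = 0 := by
          have := support_iteratedFDeriv_subset (𝕜 := ℝ) (f := φ) k
          by_contra h0
          exact hxt (this h0)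
        simp [this]
      exact IsCompact.of_isClosed_subset hsupp (isClosed_tsupport _)
        ((closure_mono h1).trans (by rw [closure_eq_iff_isClosed.mpr (isClosed_tsupport φ)]))
    obtain ⟨C, hC⟩ := hcont.bounded_above_of_compact_support hks
    exact ⟨C, fun x => by simpa [Real.norm_eq_abs] using hC x⟩
  choose C hC using H
  refine ⟨max (max (C 0) (C 1)) (max (C 2) (C 3)), ?_⟩
  intro k hk x
  interval_cases k
  · exact le_trans (hC 0 x) (le_trans (le_max_left _ _) (le_max_left _ _))
  · exact le_trans (hC 1 x) (le_trans (le_max_right _ _) (le_max_left _ _))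
  · exact le_trans (hC 2 x) (le_trans (le_max_left _ _) (le_max_right _ _))
  · exact le_trans (hC 3 x) (le_trans (le_max_right _ _) (le_max_right _ _))

lemma weak_conv {Ω : Type*} [MeasurableSpace Ω] (P : Measure Ω) [IsProbabilityMeasure P]
    (G : ℕ → Ω → ℝ) (hGmeas : ∀ n, Measurable (G n)) (Z : Ω → ℝ) (hZmeas : Measurable Z)
    (hd : Tendsto (fun n => dSmooth P (G n) Z 3) atTop (nhds 0)) :
    ∀ f : BoundedContinuousFunction ℝ ℝ,
      Tendsto (fun n => ∫ ω, f (G n ω) ∂P) atTop (nhds (∫ ω, f (Z ω) ∂P)) := by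
  have hPZ : IsProbabilityMeasure (P.map Z) := Measure.isProbabilityMeasure_map hZmeas.aemeasurable
  have hPG : ∀ n, IsProbabilityMeasure (P.map (G n)) := fun n =>
    Measure.isProbabilityMeasure_map (hGmeas n).aemeasurable
  set μ : ProbabilityMeasure ℝ := ⟨P.map Z, hPZ⟩ with hμdef
  set μs : ℕ → ProbabilityMeasure ℝ := fun n => ⟨P.map (G n), hPG n⟩ with hμsdef
  have h_opens : ∀ U : Set ℝ, IsOpen U → μ U ≤ atTop.liminf (fun n => μs n U) := by
    intro U hU
    have hcob : atTop.IsCoboundedUnder (· ≥ ·) (fun n => μs n U) :=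
      IsBoundedUnder.isCoboundedUnder_ge ⟨1, eventually_map.mpr (Filter.Eventually.of_forall
        fun n => (μs n).apply_le_one U)⟩
    have hbdd : atTop.IsBoundedUnder (· ≥ ·) (fun n => μs n U) :=
      ⟨0, eventually_map.mpr (Filter.Eventually.of_forall fun n => zero_le)⟩
    rw [le_liminf_iff hcob hbdd]
    intro b hb
    have hb' : (b : ℝ≥0∞) < (P.map Z) U := by
      have := ENNReal.coe_lt_coe.mpr hb
      rwa [μ.ennreal_coeFn_eq_coeFn_toMeasure U] at this
    obtain ⟨K, hKU, hK, hbK⟩ := hU.exists_lt_isCompact hb'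
    obtain ⟨φ, hφs, hφc, hφ01, hφK, hφ0⟩ := smooth_urysohn hK hU hKU
    obtain ⟨M, hM⟩ := deriv_bound φ hφs hφc
    have key := tendsto_integral_comp P G Z hd φ hφs M hM
    have hφcont : Continuous φ := hφs.continuous
    have hint : ∀ (W : Ω → ℝ), Measurable W → ∫ ω, φ (W ω) ∂P = ∫ x, φ x ∂(P.map W) :=
      fun W hW => (integral_map hW.aemeasurable hφcont.aestronglyMeasurable).symm
    have hφint : ∀ ν : Measure ℝ, IsProbabilityMeasure ν → Integrable φ ν := by
      intro ν hν
      exact Integrable.mono' (integrable_const 1) hφcont.aestronglyMeasurable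
        (Filter.Eventually.of_forall fun x => by
          rw [Real.norm_eq_abs, abs_of_nonneg (hφ01 x).1]; exact (hφ01 x).2)
    have hZlow : ((P.map Z) K).toReal ≤ ∫ ω, φ (Z ω) ∂P := by
      rw [hint Z hZmeas]
      have hind : Integrable (K.indicator (fun _ => (1:ℝ))) (P.map Z) :=
        (integrable_const 1).indicator hK.measurableSet
      have hmono : ∫ x, K.indicator (fun _ => (1:ℝ)) x ∂(P.map Z) ≤ ∫ x, φ x ∂(P.map Z) := by
        refine integral_mono hind (hφint _ hPZ) fun x => ?_
        by_cases hx : x ∈ K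
        · rw [Set.indicator_of_mem hx]; exact le_of_eq (hφK hx).symm
        · rw [Set.indicator_of_notMem hx]; exact (hφ01 x).1
      calc ((P.map Z) K).toReal = ∫ x, K.indicator (fun _ => (1:ℝ)) x ∂(P.map Z) := by
            rw [integral_indicator_const (1:ℝ) hK.measurableSet, smul_eq_mul, mul_one, Measure.real]
        _ ≤ _ := hmono
    have hGup : ∀ n, ∫ ω, φ (G n ω) ∂P ≤ ((P.map (G n)) U).toReal := by
      intro n
      rw [hint (G n) (hGmeas n)]
      have hind : Integrable (U.indicator (fun _ => (1:ℝ))) (P.map (G n)) :=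
        (integrable_const 1).indicator hU.measurableSet
      have hmono : ∫ x, φ x ∂(P.map (G n)) ≤ ∫ x, U.indicator (fun _ => (1:ℝ)) x ∂(P.map (G n)) := by
        refine integral_mono (hφint _ (hPG n)) hind fun x => ?_
        by_cases hx : x ∈ U
        · rw [Set.indicator_of_mem hx]; exact (hφ01 x).2
        · rw [Set.indicator_of_notMem hx, hφ0 x hx]
      calc ∫ x, φ x ∂(P.map (G n)) ≤ ∫ x, U.indicator (fun _ => (1:ℝ)) x ∂(P.map (G n)) := hmono
        _ = ((P.map (G n)) U).toReal := by
            rw [integral_indicator_const (1:ℝ) hU.measurableSet, smul_eq_mul, mul_one, Measure.real]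
    have hltZ : (b : ℝ) < ∫ ω, φ (Z ω) ∂P := by
      refine lt_of_lt_of_le ?_ hZlow
      have h1 : ((b : ℝ≥0∞)).toReal ≤ (b:ℝ) := le_of_eq (by simp)
      have := ENNReal.toReal_strict_mono (measure_ne_top _ K) hbK
      simpa using this
    filter_upwards [key.eventually (eventually_gt_nhds hltZ)] with n hn
    have : (b : ℝ) < ((P.map (G n)) U).toReal := lt_of_lt_of_le hn (hGup n)
    have hcoe : ((μs n U : ℝ≥0) : ℝ) = ((P.map (G n)) U).toReal := by
      rw [ProbabilityMeasure.coeFn_def]; rfl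
    exact_mod_cast hcoe ▸ this
  have htend := tendsto_of_forall_isOpen_le_liminf h_opens
  intro f
  have hf := ProbabilityMeasure.tendsto_iff_forall_integral_tendsto.mp htend f
  have e1 : ∀ n, ∫ x, f x ∂(μs n : Measure ℝ) = ∫ ω, f (G n ω) ∂P := fun n =>
    integral_map (hGmeas n).aemeasurable f.continuous.aestronglyMeasurable
  have e2 : ∫ x, f x ∂(μ : Measure ℝ) = ∫ ω, f (Z ω) ∂P :=
    integral_map hZmeas.aemeasurable f.continuous.aestronglyMeasurable
  simpa [e1, e2] using hf

/-- **Normal approximation of second chaos elements and the associated limit theorem.**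
For `G_n = I₂(f_n)` (so `E G_n = 0`, `E Γ₂(G_n) = κ₂(G_n)`) and `Z_α ~ N(0, α²)`, `α > 1`,
using the bound `d₃(G, Z_α) ≤ (1/3)E|Γ₃(G)| + (1/2)|α² - E Γ₂(G)| + |E Z_α - E G|`, the
identity `E[Γ₃(G_n)²] = κ₆(G_n)/120 + κ₃(G_n)²/4` and Cauchy–Schwarz, one obtains
`d₃(G_n, Z_α) ≤ (1/3)(κ₆(G_n)/120 + κ₃(G_n)²/4)^{1/2} + (1/2)|α² - κ₂(G_n)|`; consequently if
`κ₂(G_n) → α²`, `κ₃(G_n) → 0` and `κ₆(G_n) → 0` then `G_n` converges in distribution to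
`Z_α`. -/
theorem normal_approximation_second_chaos {Ω : Type*} [MeasurableSpace Ω]
    (P : Measure Ω) [IsProbabilityMeasure P]
    (G : ℕ → Ω → ℝ) (hGmeas : ∀ n, Measurable (G n))
    (Z : Ω → ℝ) (hZmeas : Measurable Z)
    (α : ℝ) (hα : 1 < α)
    (hZlaw : P.map Z = gaussianReal 0 ((α ^ 2).toNNReal))
    (Γ₂ Γ₃ : ℕ → Ω → ℝ) (κ : ℕ → ℕ → ℝ)
    (hEG : ∀ n, ∫ ω, G n ω ∂P = 0)
    (hEΓ₂ : ∀ n, ∫ ω, Γ₂ n ω ∂P = κ n 2)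
    (hΓ₃meas : ∀ n, AEStronglyMeasurable (Γ₃ n) P)
    (hΓ₃sqInt : ∀ n, Integrable (fun ω => (Γ₃ n ω) ^ 2) P)
    (hΓ₃sq : ∀ n, ∫ ω, (Γ₃ n ω) ^ 2 ∂P = κ n 6 / 120 + (κ n 3) ^ 2 / 4)
    (hbase : ∀ n,
      dSmooth P (G n) Z 3
        ≤ (1 / 3) * ∫ ω, |Γ₃ n ω| ∂P
          + (1 / 2) * |α ^ 2 - ∫ ω, Γ₂ n ω ∂P|
          + |(∫ ω, Z ω ∂P) - ∫ ω, G n ω ∂P|) :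
    (∀ n, dSmooth P (G n) Z 3
        ≤ (1 / 3) * Real.sqrt (κ n 6 / 120 + (κ n 3) ^ 2 / 4)
          + (1 / 2) * |α ^ 2 - κ n 2|) ∧
    (Tendsto (fun n => κ n 2) atTop (nhds (α ^ 2)) →
      Tendsto (fun n => κ n 3) atTop (nhds 0) →
      Tendsto (fun n => κ n 6) atTop (nhds 0) →
      ∀ f : BoundedContinuousFunction ℝ ℝ,
        Tendsto (fun n => ∫ ω, f (G n ω) ∂P) atTop (nhds (∫ ω, f (Z ω) ∂P))) := by
  have EZ : ∫ ω, Z ω ∂P = 0 := by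
    have h := integral_map (μ := P) (φ := Z) (f := fun x => x) hZmeas.aemeasurable
      aestronglyMeasurable_id
    rw [hZlaw] at h
    rw [← h, gaussian_mean_zero]
  have part1 : ∀ n, dSmooth P (G n) Z 3
      ≤ (1 / 3) * Real.sqrt (κ n 6 / 120 + (κ n 3) ^ 2 / 4) + (1 / 2) * |α ^ 2 - κ n 2| := by
    intro n
    have hb := hbase n
    rw [hEG n, hEΓ₂ n, EZ] at hb
    simp only [sub_zero, abs_zero, add_zero] at hb
    have hcs := cs_abs P (Γ₃ n) (hΓ₃meas n) (hΓ₃sqInt n)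
    rw [hΓ₃sq n] at hcs
    have hmul : (1/3 : ℝ) * ∫ ω, |Γ₃ n ω| ∂P
        ≤ (1/3) * Real.sqrt (κ n 6 / 120 + (κ n 3) ^ 2 / 4) :=
      mul_le_mul_of_nonneg_left hcs (by norm_num)
    linarith
  refine ⟨part1, ?_⟩
  intro h2 h3 h6 f
  have hub : Tendsto (fun n => (1/3) * Real.sqrt (κ n 6 / 120 + (κ n 3) ^ 2 / 4)
      + (1/2) * |α ^ 2 - κ n 2|) atTop (nhds 0) := by
    have t1 : Tendsto (fun n => κ n 6 / 120 + (κ n 3) ^ 2 / 4) atTop (nhds 0) := by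
      have := (h6.div_const 120).add ((h3.pow 2).div_const 4)
      norm_num at this
      exact this
    have t2 : Tendsto (fun n => Real.sqrt (κ n 6 / 120 + (κ n 3) ^ 2 / 4)) atTop (nhds 0) := by
      have := (Real.continuous_sqrt.continuousAt (x := 0)).tendsto.comp t1
      simpa [Function.comp_def] using this
    have t3 : Tendsto (fun n => |α ^ 2 - κ n 2|) atTop (nhds 0) := by
      have h' : Tendsto (fun n => α ^ 2 - κ n 2) atTop (nhds (α ^ 2 - α ^ 2)) :=
        tendsto_const_nhds.sub h2
      rw [sub_self] at h'
      simpa using h'.abs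
    have := (t2.const_mul (1/3 : ℝ)).add (t3.const_mul (1/2 : ℝ))
    norm_num at this
    convert this using 2 <;> ring
  have hd : Tendsto (fun n => dSmooth P (G n) Z 3) atTop (nhds 0) :=
    squeeze_zero (fun n => dSmooth_nonneg P (G n) Z 3) part1 hub
  exact weak_conv P G hGmeas Z hZmeas hd f
end
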